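/- The number of partitions λ of weight n whose Young diagram fits inside a k × ℓ rectangle (at most k parts, each part at most ℓ) equals the coefficient of q^n in the Gaussian binomial coefficient [k+ℓ choose k]_q. -/

import Mathlib

open Polynomial Finset

/-- The Gaussian (q-)binomial coefficient `[n choose k]_q`, as a polynomial in `q`
over `ℚ`. -/
noncomputable def gaussBinom : ℕ → ℕ → Polynomial ℚ
  | _, 0 => 1
  | 0, _ + 1 => 0
  | n + 1, k + 1 => gaussBinom n k + Polynomial.X ^ (k + 1) * gaussBinom n (k + 1)

lemma gaussBinom_zero_right (n : ℕ) : gaussBinom n 0 = 1 := by cases n <;> rfl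

lemma gaussBinom_eq_zero : ∀ {n k : ℕ}, n < k → gaussBinom n k = 0
  | 0, _ + 1, _ => rfl
  | n + 1, k + 1, h => by
    show gaussBinom n k + Polynomial.X ^ (k + 1) * gaussBinom n (k + 1) = 0
    rw [gaussBinom_eq_zero (by omega), gaussBinom_eq_zero (by omega), mul_zero, add_zero]

lemma gaussBinom_self : ∀ n : ℕ, gaussBinom n n = 1
  | 0 => rfl
  | n + 1 => by
    show gaussBinom n n + Polynomial.X ^ (n + 1) * gaussBinom n (n + 1) = 1
    rw [gaussBinom_self n, gaussBinom_eq_zero (by omega), mul_zero, add_zero]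

lemma sum_map_pred (s : Multiset ℕ) (hs : ∀ a ∈ s, 0 < a) :
    (s.map (· - 1)).sum + Multiset.card s = s.sum := by
  induction s using Multiset.induction with
  | empty => simp
  | cons a s ih =>
    have := hs a (Multiset.mem_cons_self a s)
    have := ih (fun b hb => hs b (Multiset.mem_cons_of_mem hb))
    simp only [Multiset.map_cons, Multiset.sum_cons, Multiset.card_cons]
    omega

lemma sum_map_succ (s : Multiset ℕ) : (s.map (· + 1)).sum = s.sum + Multiset.card s := by
  induction s using Multiset.induction with
  | empty => simp
  | cons a s ih =>
    simp only [Multiset.map_cons, Multiset.sum_cons, Multiset.card_cons, ih]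
    omega

lemma roundtrip (s : Multiset ℕ) (hs : ∀ a ∈ s, 0 < a) :
    (((s.map (· - 1)).filter (· ≠ 0)).map (· + 1)) +
      Multiset.replicate (Multiset.card s - Multiset.card ((s.map (· - 1)).filter (· ≠ 0))) 1
      = s := by
  induction s using Multiset.induction with
  | empty => simp
  | cons a s ih =>
    have ha : 0 < a := hs a (Multiset.mem_cons_self a s)
    have hs' : ∀ a ∈ s, 0 < a := fun b hb => hs b (Multiset.mem_cons_of_mem hb)
    have hcard : Multiset.card ((s.map (· - 1)).filter (· ≠ 0)) ≤ Multiset.card s :=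
      le_trans (Multiset.card_le_card (Multiset.filter_le _ _)) (by simp)
    rcases eq_or_lt_of_le (show 1 ≤ a from ha) with h1 | h2
    · have : a = 1 := h1.symm
      subst this
      rw [Multiset.map_cons]
      simp only [Nat.sub_self]
      rw [Multiset.filter_cons_of_neg _ (by simp)]
      rw [Multiset.card_cons, Nat.succ_sub hcard, Multiset.replicate_succ]
      rw [Multiset.add_cons, ih hs']
    · rw [Multiset.map_cons, Multiset.filter_cons_of_pos _ (by simp; omega),
        Multiset.map_cons, Multiset.card_cons, Multiset.card_cons, Nat.succ_sub_succ,
        Multiset.cons_add, Nat.sub_add_cancel (by omega)]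
      rw [ih hs']

/-- Partitions of `n` with exactly `k` parts, each at most `ℓ+1`, biject with
partitions of `n - k` with at most `k` parts, each at most `ℓ`. -/
noncomputable def boxEquiv (k ℓ n : ℕ) (hk : k ≤ n) :
    {p : n.Partition // Multiset.card p.parts = k ∧ ∀ a ∈ p.parts, a ≤ ℓ + 1} ≃
    {p : (n - k).Partition // Multiset.card p.parts ≤ k ∧ ∀ a ∈ p.parts, a ≤ ℓ} where
  toFun := fun ⟨p, hc, hle⟩ =>
    ⟨Nat.Partition.ofSums (n - k) (p.parts.map (· - 1))
      (by have h1 := sum_map_pred p.parts (fun a ha => p.parts_pos ha)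
          have h2 := p.parts_sum; omega),
     by
      constructor
      · calc Multiset.card ((p.parts.map (· - 1)).filter (· ≠ 0))
            ≤ Multiset.card (p.parts.map (· - 1)) :=
              Multiset.card_le_card (Multiset.filter_le _ _)
          _ = k := by rw [Multiset.card_map, hc]
      · intro a ha
        simp only [Nat.Partition.ofSums_parts] at ha
        obtain ⟨ha', -⟩ := Multiset.mem_filter.1 ha
        obtain ⟨b, hb, rfl⟩ := Multiset.mem_map.1 ha'
        have := hle b hb
        omega⟩
  invFun := fun ⟨q, hc, hle⟩ =>
    ⟨⟨q.parts.map (· + 1) + Multiset.replicate (k - Multiset.card q.parts) 1,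
      by
        intro i hi
        rcases Multiset.mem_add.1 hi with h | h
        · obtain ⟨b, -, rfl⟩ := Multiset.mem_map.1 h
          omega
        · rw [Multiset.eq_of_mem_replicate h]; omega,
      by
        rw [Multiset.sum_add, sum_map_succ, Multiset.sum_replicate, smul_eq_mul, mul_one,
          q.parts_sum]
        omega⟩,
     by
      constructor
      · simp only [Multiset.card_add, Multiset.card_map, Multiset.card_replicate]
        omega
      · intro a ha
        rcases Multiset.mem_add.1 ha with h | h
        · obtain ⟨b, hb, rfl⟩ := Multiset.mem_map.1 h
          have := hle b hb
          omega
        · rw [Multiset.eq_of_mem_replicate h]; omega⟩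
  left_inv := fun ⟨p, hc, hle⟩ => by
    apply Subtype.ext
    apply Nat.Partition.ext
    simp only [Nat.Partition.ofSums_parts]
    rw [← hc]
    exact roundtrip p.parts (fun a ha => p.parts_pos ha)
  right_inv := fun ⟨q, hc, hle⟩ => by
    apply Subtype.ext
    apply Nat.Partition.ext
    simp only [Nat.Partition.ofSums_parts]
    rw [Multiset.map_add, Multiset.map_map, Multiset.map_replicate]
    simp only [Function.comp, Nat.add_sub_cancel, Multiset.map_id']
    rw [Multiset.filter_add]
    rw [Multiset.filter_eq_self.2 (fun a ha => (q.parts_pos ha).ne')]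
    rw [Multiset.filter_eq_nil.2 (by intro a ha; rw [Multiset.eq_of_mem_replicate ha]; simp)]
    simp

lemma card_split {α : Type*} [Fintype α] (f : α → ℕ) (P : α → Prop) (k : ℕ) :
    Nat.card {x : α // f x ≤ k + 1 ∧ P x}
      = Nat.card {x : α // f x ≤ k ∧ P x} + Nat.card {x : α // f x = k + 1 ∧ P x} := by
  classical
  rw [Nat.card_eq_fintype_card, Nat.card_eq_fintype_card, Nat.card_eq_fintype_card,
    Fintype.card_subtype, Fintype.card_subtype, Fintype.card_subtype,
    ← Finset.card_union_of_disjoint (by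
      rw [Finset.disjoint_left]
      intro x hx hx'
      simp only [Finset.mem_filter] at hx hx'
      omega)]
  congr 1
  ext x
  simp only [Finset.mem_filter, Finset.mem_union]
  constructor
  · rintro ⟨-, h, hP⟩
    rcases Nat.lt_or_ge (f x) (k + 1) with h' | h'
    · exact Or.inl ⟨Finset.mem_univ x, by omega, hP⟩
    · exact Or.inr ⟨Finset.mem_univ x, by omega, hP⟩
  · rintro (⟨-, h, hP⟩ | ⟨-, h, hP⟩) <;> exact ⟨Finset.mem_univ x, by omega, hP⟩

lemma card_of_forces_empty (n : ℕ) (P : n.Partition → Prop)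
    (h1 : ∀ p : n.Partition, P p → p.parts = 0)
    (h2 : ∀ p : n.Partition, p.parts = 0 → P p) :
    Nat.card {p : n.Partition // P p} = if n = 0 then 1 else 0 := by
  split
  case isTrue h =>
    subst h
    haveI : Unique {p : Nat.Partition 0 // P p} :=
      { default := ⟨default, h2 _ (by simp)⟩
        uniq := fun x => Subtype.ext (Subsingleton.elim _ _) }
    exact Nat.card_unique
  case isFalse h =>
    haveI : IsEmpty {p : n.Partition // P p} :=
      ⟨fun ⟨p, hp⟩ => h (by rw [← p.parts_sum, h1 p hp]; simp)⟩
    exact Nat.card_of_isEmpty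

lemma card_exact_zero (k n : ℕ) (ℓ : ℕ) (h : n < k) :
    Nat.card {p : n.Partition // Multiset.card p.parts = k ∧ ∀ a ∈ p.parts, a ≤ ℓ} = 0 := by
  haveI : IsEmpty {p : n.Partition // Multiset.card p.parts = k ∧ ∀ a ∈ p.parts, a ≤ ℓ} := by
    refine ⟨fun x => ?_⟩
    obtain ⟨p, hc, -⟩ := x
    have h1 := sum_map_pred p.parts (fun a ha => p.parts_pos ha)
    have h2 := p.parts_sum
    omega
  exact Nat.card_of_isEmpty

/-- The number of partitions of `n` fitting inside a `k × ℓ` box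
(at most `k` parts, each part at most `ℓ`) is the coefficient of `q^n` in
`[k+ℓ choose k]_q`. -/
theorem card_partitions_in_box (k ℓ n : ℕ) :
    ((Nat.card {p : n.Partition // p.parts.card ≤ k ∧ ∀ a ∈ p.parts, a ≤ ℓ} : ℕ) : ℚ)
      = (gaussBinom (k + ℓ) k).coeff n := by
  induction k generalizing ℓ n with
  | zero =>
    rw [card_of_forces_empty n _
      (fun p hp => Multiset.card_eq_zero.1 (Nat.le_zero.1 hp.1))
      (fun p hp => by simp [hp]),
      Nat.zero_add, gaussBinom_zero_right, Polynomial.coeff_one]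
    split <;> simp_all [eq_comm]
  | succ k ihk =>
    induction ℓ generalizing n with
    | zero =>
      rw [card_of_forces_empty n _
        (fun p hp => Multiset.eq_zero_of_forall_notMem
          (fun a ha => absurd (p.parts_pos ha) (by have := hp.2 a ha; omega)))
        (fun p hp => by simp [hp]),
        Nat.add_zero, gaussBinom_self, Polynomial.coeff_one]
      split <;> simp_all [eq_comm]
    | succ ℓ ihl =>
      have recur : gaussBinom (k + 1 + (ℓ + 1)) (k + 1)
          = gaussBinom (k + (ℓ + 1)) k + X ^ (k + 1) * gaussBinom (k + 1 + ℓ) (k + 1) := by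
        show gaussBinom ((k + 1 + ℓ) + 1) (k + 1) = _
        rw [show gaussBinom ((k + 1 + ℓ) + 1) (k + 1)
            = gaussBinom (k + 1 + ℓ) k + X ^ (k + 1) * gaussBinom (k + 1 + ℓ) (k + 1) from rfl,
          show k + 1 + ℓ = k + (ℓ + 1) from by omega]
      rw [recur, Polynomial.coeff_add,
        card_split (fun p : n.Partition => Multiset.card p.parts) (fun p : n.Partition => ∀ a ∈ p.parts, a ≤ ℓ + 1) k]
      push_cast
      rw [ihk (ℓ + 1) n, mul_comm, Polynomial.coeff_mul_X_pow']
      congr 1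
      by_cases h : k + 1 ≤ n
      · rw [if_pos h, Nat.card_congr (boxEquiv (k + 1) ℓ n h), ihl (n - (k + 1))]
      · rw [if_neg h, card_exact_zero (k + 1) n (ℓ + 1) (by omega)]
        simp
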